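/- Let K be a field of characteristic p with Tits endomorphism θ (θ∘θ = Frobenius x ↦ x^p), extended to the rational function field K(s,t) by s^θ = t and t^θ = s^p. Define ν on the polynomial ring K[s,t] by ν(Σ a_{ij} s^i t^j) = min{i + √p·j : a_{ij} ≠ 0}, and on K(s,t) by ν(P/Q) = ν(P) − ν(Q). Then ν is a well-defined valuation on K(s,t) (ν(fg) = ν(f)+ν(g) and ν(f+g) ≥ min{ν(f),ν(g)}) and it is θ-invariant: ν(f^θ) = √p·ν(f) for all nonzero f. -/

import Mathlib

set_option maxHeartbeats 2000000
set_option synthInstance.maxHeartbeats 400000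

open MvPolynomial

private lemma val_inj13 {p : ℕ} (hp : p.Prime) {a b : Fin 2 →₀ ℕ}
    (h : (a 0 : ℝ) + Real.sqrt p * a 1 = (b 0 : ℝ) + Real.sqrt p * b 1) : a = b := by
  have hirr := hp.irrational_sqrt
  have h1 : a 1 = b 1 := by
    by_contra hne
    apply hirr
    refine ⟨((b 0 : ℚ) - a 0) / ((a 1 : ℚ) - b 1), ?_⟩
    have hden : ((a 1 : ℚ) - b 1) ≠ 0 := by
      rw [sub_ne_zero]; exact_mod_cast hne
    have hden' : ((a 1 : ℝ) - b 1) ≠ 0 := by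
      rw [sub_ne_zero]; exact_mod_cast hne
    push_cast
    field_simp
    linarith
  have h0 : (a 0 : ℝ) = b 0 := by rw [h1] at h; linarith
  have h0' : a 0 = b 0 := by exact_mod_cast h0
  ext i
  fin_cases i <;> assumption

private lemma nu_mul13 {K : Type*} [Field K] {p : ℕ} (hp : p.Prime)
    (νA : MvPolynomial (Fin 2) K → ℝ)
    (hνA : ∀ P : MvPolynomial (Fin 2) K, P ≠ 0 →
      IsLeast {r : ℝ | ∃ d ∈ P.support, r = (d 0 : ℝ) + Real.sqrt p * (d 1 : ℝ)} (νA P))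
    {P Q : MvPolynomial (Fin 2) K} (hP : P ≠ 0) (hQ : Q ≠ 0) :
    νA (P * Q) = νA P + νA Q := by
  classical
  obtain ⟨⟨dP, hdP, hvP⟩, hlbP⟩ := hνA P hP
  obtain ⟨⟨dQ, hdQ, hvQ⟩, hlbQ⟩ := hνA Q hQ
  have hPQ : P * Q ≠ 0 := mul_ne_zero hP hQ
  obtain ⟨⟨dR, hdR, hvR⟩, hlbR⟩ := hνA (P * Q) hPQ
  have hvadd : ∀ a b : Fin 2 →₀ ℕ,
      ((a + b) 0 : ℝ) + Real.sqrt p * ((a + b) 1 : ℝ)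
        = ((a 0 : ℝ) + Real.sqrt p * a 1) + ((b 0 : ℝ) + Real.sqrt p * b 1) := by
    intro a b
    simp only [Finsupp.add_apply, Nat.cast_add]
    ring
  have hcoeff : MvPolynomial.coeff (dP + dQ) (P * Q)
      = MvPolynomial.coeff dP P * MvPolynomial.coeff dQ Q := by
    rw [MvPolynomial.coeff_mul]
    refine Finset.sum_eq_single_of_mem (dP, dQ) (Finset.HasAntidiagonal.mem_antidiagonal.2 rfl) ?_
    rintro ⟨a, b⟩ hab hne
    rw [Finset.HasAntidiagonal.mem_antidiagonal] at hab
    by_contra hz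
    rw [mul_eq_zero, not_or] at hz
    have ha : a ∈ P.support := MvPolynomial.mem_support_iff.2 hz.1
    have hb : b ∈ Q.support := MvPolynomial.mem_support_iff.2 hz.2
    have hla : νA P ≤ (a 0 : ℝ) + Real.sqrt p * a 1 := hlbP ⟨a, ha, rfl⟩
    have hlb' : νA Q ≤ (b 0 : ℝ) + Real.sqrt p * b 1 := hlbQ ⟨b, hb, rfl⟩
    have hsum : ((a 0 : ℝ) + Real.sqrt p * a 1) + ((b 0 : ℝ) + Real.sqrt p * b 1)
        = νA P + νA Q := by
      rw [← hvadd, hab, hvadd, ← hvP, ← hvQ]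
    have hea : (a 0 : ℝ) + Real.sqrt p * a 1 = νA P := by linarith
    have : a = dP := val_inj13 hp (by rw [hea, hvP])
    have heb : (b 0 : ℝ) + Real.sqrt p * b 1 = νA Q := by linarith
    have hbq : b = dQ := val_inj13 hp (by rw [heb, hvQ])
    exact hne (by rw [this, hbq])
  have hmem : dP + dQ ∈ (P * Q).support := by
    rw [MvPolynomial.mem_support_iff, hcoeff]
    exact mul_ne_zero (MvPolynomial.mem_support_iff.1 hdP) (MvPolynomial.mem_support_iff.1 hdQ)
  have hle : νA (P * Q) ≤ νA P + νA Q := by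
    have := hlbR ⟨dP + dQ, hmem, rfl⟩
    rw [hvadd, ← hvP, ← hvQ] at this
    exact this
  have hge : νA P + νA Q ≤ νA (P * Q) := by
    have hsub := MvPolynomial.support_mul P Q hdR
    rw [Finset.mem_add] at hsub
    obtain ⟨a, ha, b, hb, rfl⟩ := hsub
    rw [hvR, hvadd]
    have := hlbP ⟨a, ha, rfl⟩
    have := hlbQ ⟨b, hb, rfl⟩
    linarith
  linarith

private lemma nu_add13 {K : Type*} [Field K] {p : ℕ}
    (νA : MvPolynomial (Fin 2) K → ℝ)
    (hνA : ∀ P : MvPolynomial (Fin 2) K, P ≠ 0 →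
      IsLeast {r : ℝ | ∃ d ∈ P.support, r = (d 0 : ℝ) + Real.sqrt p * (d 1 : ℝ)} (νA P))
    {P Q : MvPolynomial (Fin 2) K} (hP : P ≠ 0) (hQ : Q ≠ 0) (hPQ : P + Q ≠ 0) :
    min (νA P) (νA Q) ≤ νA (P + Q) := by
  classical
  obtain ⟨⟨d, hd, hv⟩, _⟩ := hνA (P + Q) hPQ
  have := MvPolynomial.support_add hd
  rw [Finset.mem_union] at this
  rcases this with h | h
  · exact le_trans (min_le_left _ _) (hv ▸ (hνA P hP).2 ⟨d, h, rfl⟩)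
  · exact le_trans (min_le_right _ _) (hv ▸ (hνA Q hQ).2 ⟨d, h, rfl⟩)

open MvPolynomial

private lemma theta_mono13 {K : Type*} [Field K] {p : ℕ} (hp : p.Prime)
    (θ : K →+* K)
    (θA : MvPolynomial (Fin 2) K →+* MvPolynomial (Fin 2) K)
    (hθA1 : θA (MvPolynomial.X 0) = MvPolynomial.X 1)
    (hθA2 : θA (MvPolynomial.X 1) = (MvPolynomial.X 0) ^ p)
    (hθA3 : ∀ a : K, θA (MvPolynomial.C a) = MvPolynomial.C (θ a))
    (d : Fin 2 →₀ ℕ) (a : K) :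
    θA (MvPolynomial.monomial d a)
      = MvPolynomial.monomial (Finsupp.single 0 (p * d 1) + Finsupp.single 1 (d 0)) (θ a) := by
  have key : ∀ (e : Fin 2 →₀ ℕ) (b : K),
      MvPolynomial.monomial e b = MvPolynomial.C b * MvPolynomial.X 0 ^ e 0 * MvPolynomial.X 1 ^ e 1 := by
    intro e b
    rw [MvPolynomial.monomial_eq, Finsupp.prod_fintype _ _ (fun i => pow_zero _),
      Fin.prod_univ_two, mul_assoc]
  rw [key, map_mul, map_mul, map_pow, map_pow, hθA1, hθA2, hθA3, ← pow_mul, key]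
  have h0 : ((Finsupp.single 0 (p * d 1) + Finsupp.single 1 (d 0) : Fin 2 →₀ ℕ)) 0 = p * d 1 := by
    simp [Finsupp.single_apply]
  have h1 : ((Finsupp.single 0 (p * d 1) + Finsupp.single 1 (d 0) : Fin 2 →₀ ℕ)) 1 = d 0 := by
    simp [Finsupp.single_apply]
  rw [h0, h1]
  ring

private lemma nu_theta13 {K : Type*} [Field K] {p : ℕ} (hp : p.Prime)
    (θ : K →+* K)
    (νA : MvPolynomial (Fin 2) K → ℝ)
    (hνA : ∀ P : MvPolynomial (Fin 2) K, P ≠ 0 →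
      IsLeast {r : ℝ | ∃ d ∈ P.support, r = (d 0 : ℝ) + Real.sqrt p * (d 1 : ℝ)} (νA P))
    (θA : MvPolynomial (Fin 2) K →+* MvPolynomial (Fin 2) K)
    (hθA1 : θA (MvPolynomial.X 0) = MvPolynomial.X 1)
    (hθA2 : θA (MvPolynomial.X 1) = (MvPolynomial.X 0) ^ p)
    (hθA3 : ∀ a : K, θA (MvPolynomial.C a) = MvPolynomial.C (θ a))
    {P : MvPolynomial (Fin 2) K} (hP : P ≠ 0) :
    θA P ≠ 0 ∧ νA (θA P) = Real.sqrt p * νA P := by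
  classical
  set σf : (Fin 2 →₀ ℕ) → (Fin 2 →₀ ℕ) :=
    fun d => Finsupp.single 0 (p * d 1) + Finsupp.single 1 (d 0) with hσf
  have hσ0 : ∀ d : Fin 2 →₀ ℕ, σf d 0 = p * d 1 := by
    intro d; simp [hσf, Finsupp.single_apply]
  have hσ1 : ∀ d : Fin 2 →₀ ℕ, σf d 1 = d 0 := by
    intro d; simp [hσf, Finsupp.single_apply]
  have hσinj : Function.Injective σf := by
    intro a b hab
    have h0 : p * a 1 = p * b 1 := by rw [← hσ0 a, ← hσ0 b, hab]
    have h1 : a 0 = b 0 := by rw [← hσ1 a, ← hσ1 b, hab]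
    have h2 : a 1 = b 1 := Nat.eq_of_mul_eq_mul_left hp.pos h0
    ext i; fin_cases i <;> assumption
  have hθinj : Function.Injective θ := θ.injective
  -- θA P as a sum of monomials
  have hsum : θA P = ∑ d ∈ P.support, MvPolynomial.monomial (σf d) (θ (MvPolynomial.coeff d P)) := by
    conv_lhs => rw [← MvPolynomial.support_sum_monomial_coeff P]
    rw [map_sum]
    exact Finset.sum_congr rfl fun d _ => theta_mono13 hp θ θA hθA1 hθA2 hθA3 d _
  have hcoeff : ∀ d ∈ P.support, MvPolynomial.coeff (σf d) (θA P) = θ (MvPolynomial.coeff d P) := by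
    intro d hd
    rw [hsum, MvPolynomial.coeff_sum]
    rw [Finset.sum_eq_single_of_mem d hd]
    · rw [MvPolynomial.coeff_monomial, if_pos rfl]
    · intro b _ hbd
      rw [MvPolynomial.coeff_monomial, if_neg (fun h => hbd (hσinj h))]
  have hsupp : (θA P).support = P.support.image σf := by
    apply Finset.Subset.antisymm
    · intro e he
      rw [MvPolynomial.mem_support_iff, hsum, MvPolynomial.coeff_sum] at he
      obtain ⟨d, hd, hne⟩ := Finset.exists_ne_zero_of_sum_ne_zero he
      rw [MvPolynomial.coeff_monomial] at hne
      have : σf d = e := by by_contra h; rw [if_neg h] at hne; exact hne rfl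
      exact Finset.mem_image.2 ⟨d, hd, this⟩
    · intro e he
      obtain ⟨d, hd, rfl⟩ := Finset.mem_image.1 he
      rw [MvPolynomial.mem_support_iff, hcoeff d hd]
      exact fun h => MvPolynomial.mem_support_iff.1 hd (hθinj (by rw [h, map_zero]))
  obtain ⟨d0, hd0, hv0⟩ := (hνA P hP).1
  have hlb := (hνA P hP).2
  have hθPne : θA P ≠ 0 := by
    intro h
    rw [← MvPolynomial.support_eq_empty] at h
    rw [hsupp] at h
    exact MvPolynomial.mem_support_iff.1 hd0 (by
      have := Finset.image_eq_empty.1 h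
      rw [this] at hd0
      exact absurd hd0 (Finset.notMem_empty _))
  refine ⟨hθPne, ?_⟩
  have hsq : Real.sqrt p * Real.sqrt p = p := Real.mul_self_sqrt (by positivity)
  have hsnn : (0 : ℝ) ≤ Real.sqrt p := Real.sqrt_nonneg _
  refine IsLeast.unique (hνA (θA P) hθPne) ⟨⟨σf d0, ?_, ?_⟩, ?_⟩
  · rw [hsupp]; exact Finset.mem_image_of_mem _ hd0
  · rw [hσ0, hσ1]
    push_cast
    rw [hv0]
    nlinarith [hsq]
  · rintro r ⟨e, he, rfl⟩
    rw [hsupp] at he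
    obtain ⟨d, hd, rfl⟩ := Finset.mem_image.1 he
    rw [hσ0, hσ1]
    have := hlb ⟨d, hd, rfl⟩
    push_cast
    nlinarith [hsq, hsnn]

/-- The valuation `ν(Σ a_{ij} sⁱ tʲ) = min{i + √p·j : a_{ij} ≠ 0}` on `K[s,t]` extends to
a well-defined valuation on the quotient field `K(s,t)` via `ν(P/Q) = ν(P) − ν(Q)`, and
this valuation is `θ`-invariant (`ν(f^θ) = √p·ν(f)`) for the extension of the Tits
endomorphism `θ` with `s^θ = t`, `t^θ = s^p`. -/
theorem stmt13 {K : Type*} [Field K] (p : ℕ) (hp : p.Prime) [CharP K p]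
    (θ : K →+* K) (hθ : ∀ x, θ (θ x) = x ^ p)
    (νA : MvPolynomial (Fin 2) K → ℝ)
    (hνA : ∀ P : MvPolynomial (Fin 2) K, P ≠ 0 →
      IsLeast {r : ℝ | ∃ d ∈ P.support, r = (d 0 : ℝ) + Real.sqrt p * (d 1 : ℝ)} (νA P))
    (θA : MvPolynomial (Fin 2) K →+* MvPolynomial (Fin 2) K)
    (hθA1 : θA (MvPolynomial.X 0) = MvPolynomial.X 1)
    (hθA2 : θA (MvPolynomial.X 1) = (MvPolynomial.X 0) ^ p)
    (hθA3 : ∀ a : K, θA (MvPolynomial.C a) = MvPolynomial.C (θ a))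
    (θF : FractionRing (MvPolynomial (Fin 2) K) →+* FractionRing (MvPolynomial (Fin 2) K))
    (hθF : ∀ P : MvPolynomial (Fin 2) K,
      θF (algebraMap (MvPolynomial (Fin 2) K) (FractionRing (MvPolynomial (Fin 2) K)) P)
        = algebraMap (MvPolynomial (Fin 2) K) (FractionRing (MvPolynomial (Fin 2) K))
            (θA P)) :
    ∃ ν : FractionRing (MvPolynomial (Fin 2) K) → ℝ,
      (∀ P Q : MvPolynomial (Fin 2) K, P ≠ 0 → Q ≠ 0 →
        ν (algebraMap (MvPolynomial (Fin 2) K) (FractionRing (MvPolynomial (Fin 2) K)) P /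
            algebraMap (MvPolynomial (Fin 2) K) (FractionRing (MvPolynomial (Fin 2) K)) Q)
          = νA P - νA Q) ∧
      (∀ f g, f ≠ 0 → g ≠ 0 → ν (f * g) = ν f + ν g) ∧
      (∀ f g, f ≠ 0 → g ≠ 0 → f + g ≠ 0 → min (ν f) (ν g) ≤ ν (f + g)) ∧
      (∀ f, f ≠ 0 → ν (θF f) = Real.sqrt p * ν f) := by
  classical
  set φ := algebraMap (MvPolynomial (Fin 2) K) (FractionRing (MvPolynomial (Fin 2) K)) with hφ
  have hφinj : Function.Injective φ :=
    IsFractionRing.injective (MvPolynomial (Fin 2) K) (FractionRing (MvPolynomial (Fin 2) K))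
  have hmul : ∀ {P Q : MvPolynomial (Fin 2) K}, P ≠ 0 → Q ≠ 0 → νA (P * Q) = νA P + νA Q :=
    fun hP hQ => nu_mul13 hp νA hνA hP hQ
  set ν : FractionRing (MvPolynomial (Fin 2) K) → ℝ := fun f =>
    νA (IsFractionRing.num (MvPolynomial (Fin 2) K) f)
      - νA ((IsFractionRing.den (MvPolynomial (Fin 2) K) f : MvPolynomial (Fin 2) K)) with hν
  have hνdef : ∀ f, ν f = νA (IsFractionRing.num (MvPolynomial (Fin 2) K) f)
      - νA ((IsFractionRing.den (MvPolynomial (Fin 2) K) f : MvPolynomial (Fin 2) K)) :=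
    fun f => rfl
  have hden_ne : ∀ f : FractionRing (MvPolynomial (Fin 2) K),
      (IsFractionRing.den (MvPolynomial (Fin 2) K) f : MvPolynomial (Fin 2) K) ≠ 0 :=
    fun f => nonZeroDivisors.coe_ne_zero _
  have hnum_ne : ∀ f : FractionRing (MvPolynomial (Fin 2) K), f ≠ 0 →
      IsFractionRing.num (MvPolynomial (Fin 2) K) f ≠ 0 := by
    intro f hf h
    exact hf (IsFractionRing.eq_zero_of_num_eq_zero h)
  have hφmul : ∀ a b : MvPolynomial (Fin 2) K, φ (a * b) = φ a * φ b :=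
    fun a b => map_mul φ a b
  have hφadd : ∀ a b : MvPolynomial (Fin 2) K, φ (a + b) = φ a + φ b :=
    fun a b => map_add φ a b
  have hmapne : ∀ {P : MvPolynomial (Fin 2) K}, P ≠ 0 → φ P ≠ 0 := by
    intro P hP h
    exact hP (hφinj (by rw [h, map_zero]))
  have hrepr : ∀ f : FractionRing (MvPolynomial (Fin 2) K),
      f = φ (IsFractionRing.num (MvPolynomial (Fin 2) K) f)
        / φ ((IsFractionRing.den (MvPolynomial (Fin 2) K) f : MvPolynomial (Fin 2) K)) :=
    fun f => (IsFractionRing.mk'_num_den' (MvPolynomial (Fin 2) K) f).symm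
  have hrep : ∀ (f : FractionRing (MvPolynomial (Fin 2) K)) (P Q : MvPolynomial (Fin 2) K),
      P ≠ 0 → Q ≠ 0 → f = φ P / φ Q → ν f = νA P - νA Q := by
    intro f P Q hP hQ hf
    have hfne : f ≠ 0 := by
      rw [hf]
      exact div_ne_zero (hmapne hP) (hmapne hQ)
    have hN := hnum_ne f hfne
    have hD := hden_ne f
    have hcross : IsFractionRing.num (MvPolynomial (Fin 2) K) f * Q
        = P * (IsFractionRing.den (MvPolynomial (Fin 2) K) f : MvPolynomial (Fin 2) K) := by
      apply hφinj
      rw [hφmul, hφmul]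
      have h1 : φ (IsFractionRing.num (MvPolynomial (Fin 2) K) f)
          / φ ((IsFractionRing.den (MvPolynomial (Fin 2) K) f : MvPolynomial (Fin 2) K))
          = φ P / φ Q := by rw [← hrepr f, hf]
      rw [div_eq_div_iff (hmapne hD) (hmapne hQ)] at h1
      exact h1
    have h2 := congrArg νA hcross
    rw [hmul hN hQ, hmul hP hD] at h2
    rw [hνdef]
    linarith
  refine ⟨ν, ?_, ?_, ?_, ?_⟩
  · intro P Q hP hQ
    exact hrep _ P Q hP hQ rfl
  · intro f g hf hg
    have h1 := hrep f _ _ (hnum_ne f hf) (hden_ne f) (hrepr f)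
    have h2 := hrep g _ _ (hnum_ne g hg) (hden_ne g) (hrepr g)
    have h3 : ν (f * g) = νA (IsFractionRing.num (MvPolynomial (Fin 2) K) f
          * IsFractionRing.num (MvPolynomial (Fin 2) K) g)
        - νA ((IsFractionRing.den (MvPolynomial (Fin 2) K) f : MvPolynomial (Fin 2) K)
          * (IsFractionRing.den (MvPolynomial (Fin 2) K) g : MvPolynomial (Fin 2) K)) := by
      apply hrep _ _ _ (mul_ne_zero (hnum_ne f hf) (hnum_ne g hg))
        (mul_ne_zero (hden_ne f) (hden_ne g))
      rw [hφmul, hφmul, ← div_mul_div_comm, ← hrepr f, ← hrepr g]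
    rw [h3, hmul (hnum_ne f hf) (hnum_ne g hg), hmul (hden_ne f) (hden_ne g), h1, h2]
    ring
  · intro f g hf hg hfg
    have hNf := hnum_ne f hf
    have hNg := hnum_ne g hg
    have hDf := hden_ne f
    have hDg := hden_ne g
    have hadd : f + g = φ (IsFractionRing.num (MvPolynomial (Fin 2) K) f
          * (IsFractionRing.den (MvPolynomial (Fin 2) K) g : MvPolynomial (Fin 2) K)
          + (IsFractionRing.den (MvPolynomial (Fin 2) K) f : MvPolynomial (Fin 2) K)
          * IsFractionRing.num (MvPolynomial (Fin 2) K) g)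
        / φ ((IsFractionRing.den (MvPolynomial (Fin 2) K) f : MvPolynomial (Fin 2) K)
          * (IsFractionRing.den (MvPolynomial (Fin 2) K) g : MvPolynomial (Fin 2) K)) := by
      rw [hφadd, hφmul, hφmul, hφmul,
        ← div_add_div _ _ (hmapne hDf) (hmapne hDg), ← hrepr f, ← hrepr g]
    have hNsum : IsFractionRing.num (MvPolynomial (Fin 2) K) f
          * (IsFractionRing.den (MvPolynomial (Fin 2) K) g : MvPolynomial (Fin 2) K)
          + (IsFractionRing.den (MvPolynomial (Fin 2) K) f : MvPolynomial (Fin 2) K)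
          * IsFractionRing.num (MvPolynomial (Fin 2) K) g ≠ 0 := by
      intro h
      rw [h, map_zero, zero_div] at hadd
      exact hfg hadd
    have h3 := hrep _ _ _ hNsum (mul_ne_zero hDf hDg) hadd
    have hmin := nu_add13 νA hνA (mul_ne_zero hNf hDg) (mul_ne_zero hDf hNg) hNsum
    rw [hmul hNf hDg, hmul hDf hNg] at hmin
    have h1 := hrep f _ _ hNf hDf (hrepr f)
    have h2 := hrep g _ _ hNg hDg (hrepr g)
    rw [h1, h2, h3, hmul hDf hDg]
    rcases le_total (νA (IsFractionRing.num (MvPolynomial (Fin 2) K) f)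
        + νA ((IsFractionRing.den (MvPolynomial (Fin 2) K) g : MvPolynomial (Fin 2) K)))
        (νA ((IsFractionRing.den (MvPolynomial (Fin 2) K) f : MvPolynomial (Fin 2) K))
        + νA (IsFractionRing.num (MvPolynomial (Fin 2) K) g)) with h | h
    · rw [min_eq_left h] at hmin
      apply min_le_of_left_le
      linarith
    · rw [min_eq_right h] at hmin
      apply min_le_of_right_le
      linarith
  · intro f hf
    have hNf := hnum_ne f hf
    have hDf := hden_ne f
    obtain ⟨hθNf, hvNf⟩ := nu_theta13 hp θ νA hνA θA hθA1 hθA2 hθA3 hNf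
    obtain ⟨hθDf, hvDf⟩ := nu_theta13 hp θ νA hνA θA hθA1 hθA2 hθA3 hDf
    have h1 := hrep f _ _ hNf hDf (hrepr f)
    have hθf : θF f = φ (θA (IsFractionRing.num (MvPolynomial (Fin 2) K) f))
        / φ (θA ((IsFractionRing.den (MvPolynomial (Fin 2) K) f : MvPolynomial (Fin 2) K))) := by
      conv_lhs => rw [hrepr f]
      rw [map_div₀, hθF, hθF]
    have h2 := hrep _ _ _ hθNf hθDf hθf
    rw [h2, hvNf, hvDf, h1]
    ring
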